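/- Let $\chi$ be a Dirichlet character of modulus $N$ and let $r,s$ be coprime positive integers with $N \mid rs$ and $v_2(rs) \neq 1$. Write $\chi = \chi_r\chi_s$ with moduli $(N,r)$ and $(N,s)$ respectively, and let $\bar r r + \bar s s = 1$. Then for all integers $m,n$: $S(m,n;rs;\chi) = S(m\bar s, n\bar s; r; \chi_r)\, S(m\bar r, n\bar r; s; \chi_s)$. -/

import Mathlib

open scoped BigOperators

/-- `e(x) = exp(2πix)`. -/
noncomputable def eFun (x : ℝ) : ℂ := Complex.exp (2 * Real.pi * Complex.I * x)

/-- `ε_d`: `1` if `d ≡ 1 (mod 4)`, `i` if `d ≡ 3 (mod 4)`. -/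
noncomputable def epsFactor (d : ℤ) : ℂ := if d % 4 = 1 then 1 else Complex.I

/-- The Kronecker symbol `(a | 2)`. -/
def kron2 (a : ℤ) : ℤ :=
  if a % 2 = 0 then 0 else if a % 8 = 1 ∨ a % 8 = 7 then 1 else -1

/-- The extended Kronecker symbol `(a | n)`. -/
def kroneckerSym (a n : ℤ) : ℤ :=
  if n = 0 then (if a = 1 ∨ a = -1 then 1 else 0)
  else
    (if n < 0 ∧ a < 0 then -1 else 1) *
      kron2 a ^ (n.natAbs.factorization 2) *
      jacobiSym a (n.natAbs / 2 ^ (n.natAbs.factorization 2))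

/-- The half-integral weight Kloosterman sum
`K_ℓ(m,n;c;χ) = ∑_{ad ≡ 1 (c)} ε_d^ℓ conj(χ(d)) (c|d) e((ma+nd)/c)`. -/
noncomputable def Ksum (ℓ m n : ℤ) (c : ℕ) [NeZero c] {N : ℕ}
    (χ : DirichletCharacter ℂ N) : ℂ :=
  ∑ d : (ZMod c)ˣ,
    epsFactor ((d : ZMod c).val : ℤ) ^ ℓ *
      (starRingEnd ℂ) (χ (((d : ZMod c).val : ℕ) : ZMod N)) *
      (kroneckerSym (c : ℤ) ((d : ZMod c).val : ℤ) : ℂ) *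
      eFun (((m * (((d⁻¹ : (ZMod c)ˣ) : ZMod c).val : ℤ) +
              n * ((d : ZMod c).val : ℤ) : ℤ) : ℝ) / (c : ℝ))

/-- The Dirichlet-twisted Salié sum
`S(m,n;c;χ) = ∑_{ad ≡ 1 (c)} conj(χ(d)) (d|c) e((ma+nd)/c)`. -/
noncomputable def Ssum (m n : ℤ) (c : ℕ) [NeZero c] {N : ℕ}
    (χ : DirichletCharacter ℂ N) : ℂ :=
  ∑ d : (ZMod c)ˣ,
    (starRingEnd ℂ) (χ (((d : ZMod c).val : ℕ) : ZMod N)) *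
      (kroneckerSym ((d : ZMod c).val : ℤ) (c : ℤ) : ℂ) *
      eFun (((m * (((d⁻¹ : (ZMod c)ˣ) : ZMod c).val : ℤ) +
              n * ((d : ZMod c).val : ℤ) : ℤ) : ℝ) / (c : ℝ))

/- ### Auxiliary lemmas -/

lemma eFun_add (x y : ℝ) : eFun (x + y) = eFun x * eFun y := by
  simp [eFun, mul_add, Complex.exp_add]

lemma eFun_int (k : ℤ) : eFun (k : ℝ) = 1 := by
  have : (2 : ℂ) * Real.pi * Complex.I * ((k : ℝ) : ℂ) = (k : ℂ) * (2 * Real.pi * Complex.I) := by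
    push_cast; ring
  rw [eFun, this, Complex.exp_int_mul_two_pi_mul_I]

lemma eFun_div_congr {c : ℕ} (hc : c ≠ 0) {x y : ℤ} (h : x % (c : ℤ) = y % (c : ℤ)) :
    eFun ((x : ℝ) / (c : ℝ)) = eFun ((y : ℝ) / (c : ℝ)) := by
  obtain ⟨k, hk⟩ : (c : ℤ) ∣ (x - y) := Int.ModEq.dvd (Int.ModEq.symm h)
  have hx : x = y + c * k := by omega
  have hcr : (c : ℝ) ≠ 0 := Nat.cast_ne_zero.mpr hc
  have : (x : ℝ) / (c : ℝ) = (y : ℝ) / (c : ℝ) + (k : ℝ) := by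
    rw [hx]; push_cast; field_simp
  rw [this, eFun_add, eFun_int, mul_one]

lemma kron2_sq {a : ℤ} (ha : a % 2 ≠ 0) : kron2 a ^ 2 = 1 := by
  unfold kron2; rw [if_neg ha]; split <;> norm_num

lemma kron2_mod8 {a b : ℤ} (h : a % 8 = b % 8) : kron2 a = kron2 b := by
  have h2 : a % 2 = b % 2 := by omega
  unfold kron2; rw [h, h2]

lemma kroneckerSym_nat (a : ℤ) (c : ℕ) (hc : c ≠ 0) :
    kroneckerSym a (c : ℤ) =
      kron2 a ^ (c.factorization 2) * jacobiSym a (c / 2 ^ (c.factorization 2)) := by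
  unfold kroneckerSym
  rw [if_neg (by exact_mod_cast hc), if_neg (by push_neg; intro h; omega)]
  simp [Int.natAbs_natCast]

lemma kroneckerSym_mul (a : ℤ) (r s : ℕ) (hr : r ≠ 0) (hs : s ≠ 0) :
    kroneckerSym a ((r * s : ℕ) : ℤ) = kroneckerSym a (r : ℤ) * kroneckerSym a (s : ℤ) := by
  rw [kroneckerSym_nat a r hr, kroneckerSym_nat a s hs,
    kroneckerSym_nat a (r * s) (Nat.mul_ne_zero hr hs)]
  have hf : (r * s).factorization 2 = r.factorization 2 + s.factorization 2 := by
    rw [Nat.factorization_mul hr hs]; rfl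
  have hd : (r * s) / 2 ^ ((r * s).factorization 2)
      = (r / 2 ^ (r.factorization 2)) * (s / 2 ^ (s.factorization 2)) := by
    rw [hf, pow_add]
    exact (Nat.div_mul_div_comm (Nat.ordProj_dvd r 2) (Nat.ordProj_dvd s 2)).symm
  have hr' : r / 2 ^ (r.factorization 2) ≠ 0 :=
    Nat.ne_of_gt (Nat.div_pos (Nat.le_of_dvd (Nat.pos_of_ne_zero hr) (Nat.ordProj_dvd r 2))
      (Nat.pow_pos (by norm_num)))
  have hs' : s / 2 ^ (s.factorization 2) ≠ 0 :=
    Nat.ne_of_gt (Nat.div_pos (Nat.le_of_dvd (Nat.pos_of_ne_zero hs) (Nat.ordProj_dvd s 2))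
      (Nat.pow_pos (by norm_num)))
  rw [hf] at hd ⊢
  rw [hd, pow_add, jacobiSym.mul_right' a hr' hs']
  ring

lemma kroneckerSym_congr {a b : ℤ} (c : ℕ) (hc : c ≠ 0) (hv : c.factorization 2 ≠ 1)
    (hodd : 2 ∣ c → a % 2 = 1) (h : a % (c : ℤ) = b % (c : ℤ)) :
    kroneckerSym a (c : ℤ) = kroneckerSym b (c : ℤ) := by
  rw [kroneckerSym_nat a c hc, kroneckerSym_nat b c hc]
  have hj : jacobiSym a (c / 2 ^ (c.factorization 2))
      = jacobiSym b (c / 2 ^ (c.factorization 2)) := by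
    apply jacobiSym.mod_left'
    have hdvd : ((c / 2 ^ (c.factorization 2) : ℕ) : ℤ) ∣ (c : ℤ) :=
      Int.natCast_dvd_natCast.2 (Nat.div_dvd_of_dvd (Nat.ordProj_dvd c 2))
    exact Int.ModEq.of_dvd hdvd h
  rw [hj]
  congr 1
  rcases Nat.eq_zero_or_pos (c.factorization 2) with h0 | hpos
  · rw [h0]; simp
  · have h2c : 2 ∣ c :=
      dvd_trans (dvd_pow_self 2 (Nat.pos_iff_ne_zero.mp hpos)) (Nat.ordProj_dvd c 2)
    have ha2 : a % 2 = 1 := hodd h2c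
    have hab2 : a % 2 = b % 2 := Int.ModEq.of_dvd (by exact_mod_cast h2c) h
    have hb2 : b % 2 = 1 := by omega
    rcases eq_or_lt_of_le (show 2 ≤ c.factorization 2 by omega) with h2 | h3
    · rw [← h2, kron2_sq (by omega), kron2_sq (by omega)]
    · have h8 : (8 : ℤ) ∣ (c : ℤ) := by
        have h1 : (2 ^ 3 : ℕ) ∣ 2 ^ (c.factorization 2) := pow_dvd_pow 2 (by omega)
        have := dvd_trans h1 (Nat.ordProj_dvd c 2)
        exact_mod_cast this
      rw [kron2_mod8 (Int.ModEq.of_dvd h8 h)]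

section CRT
variable {r s : ℕ} [NeZero r] [NeZero s]

lemma crt_fst_coe (hrs : Nat.Coprime r s) (d : ZMod (r * s)) :
    (ZMod.chineseRemainder hrs d).1 = ((d.val : ℕ) : ZMod r) := by
  haveI : NeZero (r * s) := ⟨Nat.mul_ne_zero (NeZero.ne r) (NeZero.ne s)⟩
  have h1 : ZMod.chineseRemainder hrs d
      = ZMod.castHom (show Nat.lcm r s ∣ r * s by simp [Nat.lcm_dvd_iff]) (ZMod r × ZMod s) d := rfl
  rw [h1, ZMod.castHom_apply, ← ZMod.natCast_val d, Prod.fst_natCast]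

lemma crt_snd_coe (hrs : Nat.Coprime r s) (d : ZMod (r * s)) :
    (ZMod.chineseRemainder hrs d).2 = ((d.val : ℕ) : ZMod s) := by
  haveI : NeZero (r * s) := ⟨Nat.mul_ne_zero (NeZero.ne r) (NeZero.ne s)⟩
  have h1 : ZMod.chineseRemainder hrs d
      = ZMod.castHom (show Nat.lcm r s ∣ r * s by simp [Nat.lcm_dvd_iff]) (ZMod r × ZMod s) d := rfl
  rw [h1, ZMod.castHom_apply, ← ZMod.natCast_val d, Prod.snd_natCast]

noncomputable def crtUnits (hrs : Nat.Coprime r s) : (ZMod (r * s))ˣ ≃* (ZMod r)ˣ × (ZMod s)ˣ :=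
  (Units.mapEquiv (ZMod.chineseRemainder hrs).toMulEquiv).trans MulEquiv.prodUnits

lemma crtUnits_fst_val (hrs : Nat.Coprime r s) (d : (ZMod (r * s))ˣ) :
    (((crtUnits hrs d).1 : (ZMod r)ˣ) : ZMod r).val = (d : ZMod (r * s)).val % r := by
  have h : (((crtUnits hrs d).1 : (ZMod r)ˣ) : ZMod r)
      = (ZMod.chineseRemainder hrs (d : ZMod (r * s))).1 := rfl
  rw [h, crt_fst_coe, ZMod.val_natCast]

lemma crtUnits_snd_val (hrs : Nat.Coprime r s) (d : (ZMod (r * s))ˣ) :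
    (((crtUnits hrs d).2 : (ZMod s)ˣ) : ZMod s).val = (d : ZMod (r * s)).val % s := by
  have h : (((crtUnits hrs d).2 : (ZMod s)ˣ) : ZMod s)
      = (ZMod.chineseRemainder hrs (d : ZMod (r * s))).2 := rfl
  rw [h, crt_snd_coe, ZMod.val_natCast]

lemma crtUnits_fst_inv_val (hrs : Nat.Coprime r s) (d : (ZMod (r * s))ˣ) :
    ((((crtUnits hrs d).1)⁻¹ : (ZMod r)ˣ) : ZMod r).val
      = ((d⁻¹ : (ZMod (r * s))ˣ) : ZMod (r * s)).val % r := by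
  have h : ((crtUnits hrs d).1)⁻¹ = (crtUnits hrs d⁻¹).1 := by rw [map_inv]; rfl
  rw [h, crtUnits_fst_val]

lemma crtUnits_snd_inv_val (hrs : Nat.Coprime r s) (d : (ZMod (r * s))ˣ) :
    ((((crtUnits hrs d).2)⁻¹ : (ZMod s)ˣ) : ZMod s).val
      = ((d⁻¹ : (ZMod (r * s))ˣ) : ZMod (r * s)).val % s := by
  have h : ((crtUnits hrs d).2)⁻¹ = (crtUnits hrs d⁻¹).2 := by rw [map_inv]; rfl
  rw [h, crtUnits_snd_val]

end CRT

lemma fact2_split {r s : ℕ} (hrs : Nat.Coprime r s) (hr0 : r ≠ 0) (hs0 : s ≠ 0)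
    (hv2 : (r * s).factorization 2 ≠ 1) :
    r.factorization 2 ≠ 1 ∧ s.factorization 2 ≠ 1 := by
  have hf : (r * s).factorization 2 = r.factorization 2 + s.factorization 2 := by
    rw [Nat.factorization_mul hr0 hs0]; rfl
  have hnot : ¬(r.factorization 2 ≠ 0 ∧ s.factorization 2 ≠ 0) := by
    rintro ⟨h1, h2⟩
    have d1 : 2 ∣ r := Nat.dvd_of_factorization_pos h1
    have d2 : 2 ∣ s := Nat.dvd_of_factorization_pos h2
    have := Nat.dvd_gcd d1 d2
    rw [hrs] at this; omega
  omega

/-- Twisted multiplicativity of Salié sums: for `r, s` coprime with `N ∣ rs` and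
`v₂(rs) ≠ 1`, and `χ = χ_r χ_s`, `r̄r + s̄s = 1`,
`S(m,n;rs;χ) = S(ms̄, ns̄; r; χ_r) S(mr̄, nr̄; s; χ_s)`. -/
theorem stmt_8 {N : ℕ} (χ : DirichletCharacter ℂ N)
    (r s : ℕ) [NeZero r] [NeZero s] (hrs : Nat.Coprime r s)
    (hN : N ∣ r * s) (hv2 : (r * s).factorization 2 ≠ 1)
    (χr : DirichletCharacter ℂ (N.gcd r)) (χs : DirichletCharacter ℂ (N.gcd s))
    (hfac : ∀ d : ℤ, χ (d : ZMod N) = χr (d : ZMod (N.gcd r)) * χs (d : ZMod (N.gcd s)))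
    (rb sb : ℤ) (hbez : rb * r + sb * s = 1) (m n : ℤ) :
    Ssum m n (r * s) χ = Ssum (m * sb) (n * sb) r χr * Ssum (m * rb) (n * rb) s χs := by
  have hr0 : r ≠ 0 := NeZero.ne r
  have hs0 : s ≠ 0 := NeZero.ne s
  obtain ⟨hvr, hvs⟩ := fact2_split hrs hr0 hs0 hv2
  have hrR : (r : ℝ) ≠ 0 := Nat.cast_ne_zero.mpr hr0
  have hsR : (s : ℝ) ≠ 0 := Nat.cast_ne_zero.mpr hs0
  set T1 : (ZMod r)ˣ → ℂ := fun u =>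
    (starRingEnd ℂ) (χr (((u : ZMod r).val : ℕ) : ZMod (N.gcd r))) *
      (kroneckerSym ((u : ZMod r).val : ℤ) (r : ℤ) : ℂ) *
      eFun ((((m * sb) * (((u⁻¹ : (ZMod r)ˣ) : ZMod r).val : ℤ) +
              (n * sb) * ((u : ZMod r).val : ℤ) : ℤ) : ℝ) / (r : ℝ)) with hT1
  set T2 : (ZMod s)ˣ → ℂ := fun v =>
    (starRingEnd ℂ) (χs (((v : ZMod s).val : ℕ) : ZMod (N.gcd s))) *
      (kroneckerSym ((v : ZMod s).val : ℤ) (s : ℤ) : ℂ) *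
      eFun ((((m * rb) * (((v⁻¹ : (ZMod s)ˣ) : ZMod s).val : ℤ) +
              (n * rb) * ((v : ZMod s).val : ℤ) : ℤ) : ℝ) / (s : ℝ)) with hT2
  have key : ∀ d : (ZMod (r * s))ˣ,
      (starRingEnd ℂ) (χ ((((d : ZMod (r * s)).val : ℕ)) : ZMod N)) *
        (kroneckerSym (((d : ZMod (r * s)).val : ℕ) : ℤ) ((r * s : ℕ) : ℤ) : ℂ) *
        eFun (((m * (((d⁻¹ : (ZMod (r * s))ˣ) : ZMod (r * s)).val : ℤ) +
                n * (((d : ZMod (r * s)).val : ℕ) : ℤ) : ℤ) : ℝ) / ((r * s : ℕ) : ℝ))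
      = T1 ((crtUnits hrs).toEquiv d).1 * T2 ((crtUnits hrs).toEquiv d).2 := by
    intro d
    set a : ℕ := (d : ZMod (r * s)).val with ha
    set A : ℕ := ((d⁻¹ : (ZMod (r * s))ˣ) : ZMod (r * s)).val with hA
    have hcop : Nat.Coprime a (r * s) := ZMod.val_coe_unit_coprime d
    have hodd : ∀ t : ℕ, 2 ∣ t → t ∣ r * s → ((a : ℤ) % 2 = 1) := by
      intro t h2t htrs
      have h2 : ¬ (2 ∣ a) := by
        intro hh
        have := Nat.dvd_gcd hh (dvd_trans h2t htrs)
        rw [hcop] at this; omega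
      omega
    -- component values
    have e1 : (((crtUnits hrs).toEquiv d).1 : ZMod r).val = a % r := crtUnits_fst_val hrs d
    have e2 : (((crtUnits hrs).toEquiv d).2 : ZMod s).val = a % s := crtUnits_snd_val hrs d
    have e3 : (((((crtUnits hrs).toEquiv d).1)⁻¹ : (ZMod r)ˣ) : ZMod r).val = A % r :=
      crtUnits_fst_inv_val hrs d
    have e4 : (((((crtUnits hrs).toEquiv d).2)⁻¹ : (ZMod s)ˣ) : ZMod s).val = A % s :=
      crtUnits_snd_inv_val hrs d
    rw [hT1, hT2]
    simp only [e1, e2, e3, e4]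
    -- χ component
    have c2 : ((a : ℕ) : ZMod (N.gcd r)) = ((a % r : ℕ) : ZMod (N.gcd r)) := by
      rw [ZMod.natCast_eq_natCast_iff]
      exact Nat.ModEq.of_dvd (Nat.gcd_dvd_right N r) (Nat.mod_modEq a r).symm
    have c3 : ((a : ℕ) : ZMod (N.gcd s)) = ((a % s : ℕ) : ZMod (N.gcd s)) := by
      rw [ZMod.natCast_eq_natCast_iff]
      exact Nat.ModEq.of_dvd (Nat.gcd_dvd_right N s) (Nat.mod_modEq a s).symm
    have hχ : χ ((a : ℕ) : ZMod N)
        = χr ((a % r : ℕ) : ZMod (N.gcd r)) * χs ((a % s : ℕ) : ZMod (N.gcd s)) := by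
      have h0 := hfac (a : ℤ)
      push_cast at h0
      rw [← c2, ← c3]
      exact h0
    -- Kronecker component
    have m1 : ((a : ℕ) : ℤ) % (r : ℤ) = ((a % r : ℕ) : ℤ) % (r : ℤ) := by
      push_cast
      exact (Int.emod_emod_of_dvd _ dvd_rfl).symm
    have m2 : ((a : ℕ) : ℤ) % (s : ℤ) = ((a % s : ℕ) : ℤ) % (s : ℤ) := by
      push_cast
      exact (Int.emod_emod_of_dvd _ dvd_rfl).symm
    have hK : kroneckerSym ((a : ℕ) : ℤ) ((r * s : ℕ) : ℤ)
        = kroneckerSym ((a % r : ℕ) : ℤ) (r : ℤ) * kroneckerSym ((a % s : ℕ) : ℤ) (s : ℤ) := by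
      rw [kroneckerSym_mul _ r s hr0 hs0]
      congr 1
      · exact kroneckerSym_congr r hr0 hvr
          (fun h2r => hodd r h2r (dvd_mul_right r s)) m1
      · exact kroneckerSym_congr s hs0 hvs
          (fun h2s => hodd s h2s (dvd_mul_left s r)) m2
    -- exponential component
    have hsplit : (((m * (A : ℤ) + n * (a : ℤ)) : ℤ) : ℝ) / ((r * s : ℕ) : ℝ)
        = (((sb * (m * A + n * a)) : ℤ) : ℝ) / (r : ℝ)
          + (((rb * (m * A + n * a)) : ℤ) : ℝ) / (s : ℝ) := by
      have hb : (rb : ℝ) * r + sb * s = 1 := by exact_mod_cast hbez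
      push_cast
      rw [div_add_div _ _ hrR hsR]
      rw [show (sb : ℝ) * (m * A + n * a) * s + r * (rb * (m * A + n * a))
          = (m * A + n * a) * (rb * r + sb * s) from by ring, hb, mul_one]
    have hmodr : (sb * (m * A + n * a)) % (r : ℤ)
        = ((m * sb) * ((A % r : ℕ) : ℤ) + (n * sb) * ((a % r : ℕ) : ℤ)) % (r : ℤ) := by
      push_cast
      have e1 : ((A : ℤ) % r) % (r : ℤ) = (A : ℤ) % r := Int.emod_emod_of_dvd _ dvd_rfl
      have e2 : ((a : ℤ) % r) % (r : ℤ) = (a : ℤ) % r := Int.emod_emod_of_dvd _ dvd_rfl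
      have := (Int.ModEq.add ((Int.ModEq.mul_left (m * sb)) e1)
        ((Int.ModEq.mul_left (n * sb)) e2))
      rw [show sb * (m * (A : ℤ) + n * a) = m * sb * (A : ℤ) + n * sb * a from by ring]
      exact this.symm
    have hmods : (rb * (m * A + n * a)) % (s : ℤ)
        = ((m * rb) * ((A % s : ℕ) : ℤ) + (n * rb) * ((a % s : ℕ) : ℤ)) % (s : ℤ) := by
      push_cast
      have e1 : ((A : ℤ) % s) % (s : ℤ) = (A : ℤ) % s := Int.emod_emod_of_dvd _ dvd_rfl
      have e2 : ((a : ℤ) % s) % (s : ℤ) = (a : ℤ) % s := Int.emod_emod_of_dvd _ dvd_rfl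
      have := (Int.ModEq.add ((Int.ModEq.mul_left (m * rb)) e1)
        ((Int.ModEq.mul_left (n * rb)) e2))
      rw [show rb * (m * (A : ℤ) + n * a) = m * rb * (A : ℤ) + n * rb * a from by ring]
      exact this.symm
    have hE : eFun (((m * (A : ℤ) + n * (a : ℤ) : ℤ) : ℝ) / ((r * s : ℕ) : ℝ))
        = eFun ((((m * sb) * ((A % r : ℕ) : ℤ) + (n * sb) * ((a % r : ℕ) : ℤ) : ℤ) : ℝ) / (r : ℝ))
          * eFun ((((m * rb) * ((A % s : ℕ) : ℤ) + (n * rb) * ((a % s : ℕ) : ℤ) : ℤ) : ℝ) / (s : ℝ)) := by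
      rw [hsplit, eFun_add, eFun_div_congr hr0 hmodr, eFun_div_congr hs0 hmods]
    rw [hχ, map_mul, hE]
    have hKC : ((kroneckerSym ((a : ℕ) : ℤ) ((r * s : ℕ) : ℤ) : ℤ) : ℂ)
        = ((kroneckerSym ((a % r : ℕ) : ℤ) (r : ℤ) : ℤ) : ℂ)
          * ((kroneckerSym ((a % s : ℕ) : ℤ) (s : ℤ) : ℤ) : ℂ) := by
      rw [hK]; push_cast; ring
    rw [hKC]
    ring
  calc Ssum m n (r * s) χ
      = ∑ p : (ZMod r)ˣ × (ZMod s)ˣ, T1 p.1 * T2 p.2 :=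
        Fintype.sum_equiv (crtUnits hrs).toEquiv _ _ key
    _ = (∑ u : (ZMod r)ˣ, T1 u) * (∑ v : (ZMod s)ˣ, T2 v) := by
        rw [Finset.sum_mul_sum]
        exact Fintype.sum_prod_type (f := fun p : (ZMod r)ˣ × (ZMod s)ˣ => T1 p.1 * T2 p.2)
    _ = Ssum (m * sb) (n * sb) r χr * Ssum (m * rb) (n * rb) s χs := rfl
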